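/- In the frontdoor-style ADMG with vertices {Z_1, Z_2, Z_3, X_1, X_2}, directed edges Z_3→Z_1, Z_1→Z_2, X_1→Z_1, Z_1→X_2, and bidirected edges Z_3↔Z_1, Z_1↔Z_2, X_1↔X_2, any two strictly positive SCMs P and Q inducing this graph that satisfy P(z_1,z_2,z_3 | x_1) = Q(z_1,z_2,z_3 | do(x_1)) and P(x_1,x_2,z_1,z_3) = Q(x_1,x_2,z_1,z_3) must satisfy P(x_1,x_2,z_1,z_2,z_3) = Q(x_1,x_2,z_1,z_2,z_3). -/

import Mathlib

open Classical

noncomputable section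

/-- An acyclic directed mixed graph (ADMG): directed edges (causal) and
bidirected edges (latent confounders). -/
structure ADMG (V : Type) where
  dir : V → V → Prop
  bidir : V → V → Prop
  bidir_symm : ∀ a b, bidir a b → bidir b a
  acyclic : ∀ v, ¬ Relation.TransGen dir v v

namespace ADMG

variable {V : Type} [Fintype V] [DecidableEq V]

/-- Observed parents of a set `W`, outside `W`. -/
def parents (G : ADMG V) (W : Set V) : Set V :=
  {v | v ∉ W ∧ ∃ w ∈ W, G.dir v w}

/-- Observed parents of a finite set `W`, outside `W`. -/
def parentsF (G : ADMG V) (W : Finset V) : Finset V :=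
  Finset.univ.filter fun v => v ∉ W ∧ ∃ w ∈ W, G.dir v w

/-- Ancestors of a set `W` (including `W` itself). -/
def ancestors (G : ADMG V) (W : Set V) : Set V :=
  {v | ∃ w ∈ W, Relation.ReflTransGen G.dir v w}

/-- Ancestors of a finite set `W` (including `W` itself). -/
def ancestorsF (G : ADMG V) (W : Finset V) : Finset V :=
  Finset.univ.filter fun v => ∃ w ∈ W, Relation.ReflTransGen G.dir v w

/-- Bidirected connectivity (paths of bidirected edges). -/
def biConn (G : ADMG V) (a b : V) : Prop :=
  Relation.ReflTransGen G.bidir a b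

/-- `C` is a c-component of `G`: a maximal bidirected-connected set. -/
def isCComponent (G : ADMG V) (C : Set V) : Prop :=
  C.Nonempty ∧ (∀ a ∈ C, ∀ b ∈ C, G.biConn a b) ∧
    ∀ a ∈ C, ∀ b, G.biConn a b → b ∈ C

/-- The set of c-components of `G`. -/
def cComponents (G : ADMG V) : Set (Set V) := {C | G.isCComponent C}

/-- The graph after `do(I)`: incoming directed edges into `I` and bidirected
edges incident to `I` are removed. -/
def doGraph (G : ADMG V) (I : Set V) : ADMG V where
  dir a b := G.dir a b ∧ b ∉ I
  bidir a b := G.bidir a b ∧ a ∉ I ∧ b ∉ I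
  bidir_symm := fun a b h => ⟨G.bidir_symm a b h.1, h.2.2, h.2.1⟩
  acyclic := fun v h => G.acyclic v (Relation.TransGen.mono (fun _ _ hx => hx.1) v v h)

/-- The graph with all outgoing directed edges of `X` removed. -/
def underGraph (G : ADMG V) (X : Set V) : ADMG V where
  dir a b := G.dir a b ∧ a ∉ X
  bidir := G.bidir
  bidir_symm := G.bidir_symm
  acyclic := fun v h => G.acyclic v (Relation.TransGen.mono (fun _ _ hx => hx.1) v v h)

/-- The induced sub-graph on a vertex set `S`. -/
def induced (G : ADMG V) (S : Set V) : ADMG V where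
  dir a b := G.dir a b ∧ a ∈ S ∧ b ∈ S
  bidir a b := G.bidir a b ∧ a ∈ S ∧ b ∈ S
  bidir_symm := fun a b h => ⟨G.bidir_symm a b h.1, h.2.2, h.2.1⟩
  acyclic := fun v h => G.acyclic v (Relation.TransGen.mono (fun _ _ hx => hx.1) v v h)

/-- Adjacency in the mixed graph. -/
def adjacent (G : ADMG V) (a b : V) : Prop := G.dir a b ∨ G.dir b a ∨ G.bidir a b

/-- The edge between `a` and `b` points into `b`. -/
def intoEdge (G : ADMG V) (a b : V) : Prop := G.dir a b ∨ G.bidir a b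

/-- `b` is a collider on the consecutive triple `a, b, c`. -/
def isCollider (G : ADMG V) (a b c : V) : Prop := G.intoEdge a b ∧ G.intoEdge c b

/-- A walk (list of vertices) that is active given the conditioning set `Z`:
non-colliders avoid `Z`, colliders have a descendant in `Z`. -/
def ActiveWalk (G : ADMG V) (Z : Set V) (p : List V) : Prop :=
  p.Chain' G.adjacent ∧
    ∀ i a b c, p[i]? = some a → p[i + 1]? = some b → p[i + 2]? = some c →
      (G.isCollider a b c → ∃ z ∈ Z, Relation.ReflTransGen G.dir b z) ∧
      (¬ G.isCollider a b c → b ∉ Z)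

/-- d-connection of `X` and `Y` given `Z` in the mixed graph (m-connection). -/
def dConnected (G : ADMG V) (X Y Z : Set V) : Prop :=
  ∃ p : List V, G.ActiveWalk Z p ∧
    (∃ x ∈ X, p.head? = some x) ∧ ∃ y ∈ Y, p.getLast? = some y

/-- d-separation of `X` and `Y` given `Z`. -/
def dSeparated (G : ADMG V) (X Y Z : Set V) : Prop := ¬ G.dConnected X Y Z

end ADMG

/-- A (semi-Markovian) structural causal model over the ADMG `G`, with observed
variables valued in `Val`: independent finite latents `L`, mechanisms `f`
reading only observed parents and own latents (shared latents forcing a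
bidirected edge), and the solution map of the structural equations under an
intervention. -/
structure SCM (V : Type) (Val : Type) [Fintype V] [DecidableEq V] [Fintype Val]
    (G : ADMG V) where
  L : Type
  [fintL : Fintype L]
  [decL : DecidableEq L]
  NVal : Type
  [fintN : Fintype NVal]
  ν : L → NVal → ℝ
  ν_nonneg : ∀ l x, 0 ≤ ν l x
  ν_sum : ∀ l, ∑ x, ν l x = 1
  reads : V → L → Prop
  semiMarkov : ∀ v w l, v ≠ w → reads v l → reads w l → G.bidir v w
  f : V → (V → Val) → (L → NVal) → Val
  f_parents : ∀ v x y ω, (∀ p, G.dir p v → x p = y p) → f v x ω = f v y ω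
  f_latents : ∀ v x ω ω', (∀ l, reads v l → ω l = ω' l) → f v x ω = f v x ω'
  solve : Finset V → (V → Val) → (L → NVal) → V → Val
  solve_spec : ∀ I x ω v,
    solve I x ω v = if v ∈ I then x v else f v (solve I x ω) ω

namespace SCM

attribute [instance] SCM.fintL SCM.decL SCM.fintN

variable {V Val : Type} [Fintype V] [DecidableEq V] [Fintype Val] {G : ADMG V}

/-- Probability of a full latent configuration (latents are independent). -/
def μ (M : SCM V Val G) (ω : M.L → M.NVal) : ℝ := ∏ l, M.ν l (ω l)

/-- The interventional distribution `P(y | do(I := x))` (observational for `I = ∅`). -/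
def P (M : SCM V Val G) (I : Finset V) (x : V → Val) (y : V → Val) : ℝ :=
  ∑ ω : M.L → M.NVal, if M.solve I x ω = y then M.μ ω else 0

/-- The marginal interventional distribution `P(S = y|_S | do(I := x))`. -/
def Pm (M : SCM V Val G) (I : Finset V) (x : V → Val) (S : Finset V) (y : V → Val) : ℝ :=
  ∑ z : V → Val, if ∀ v ∈ S, z v = y v then M.P I x z else 0

/-- The conditional distribution `P(S = y|_S | C = y|_C, do(I := x))`. -/
def cond (M : SCM V Val G) (I : Finset V) (x : V → Val) (S C : Finset V)
    (y : V → Val) : ℝ :=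
  M.Pm I x (S ∪ C) y / M.Pm I x C y

/-- Strict positivity of the induced observational distribution. -/
def positive (M : SCM V Val G) : Prop := ∀ x y, 0 < M.P ∅ x y

end SCM

end


/-- The frontdoor-style ADMG on `{Z₁ = 0, Z₂ = 1, Z₃ = 2, X₁ = 3, X₂ = 4}` with
directed edges `Z₃ → Z₁`, `Z₁ → Z₂`, `X₁ → Z₁`, `Z₁ → X₂` and bidirected edges
`Z₃ ↔ Z₁`, `Z₁ ↔ Z₂`, `X₁ ↔ X₂`. -/
def G5 : ADMG (Fin 5) where
  dir a b := (a = 2 ∧ b = 0) ∨ (a = 0 ∧ b = 1) ∨ (a = 3 ∧ b = 0) ∨ (a = 0 ∧ b = 4)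
  bidir a b := (a = 2 ∧ b = 0) ∨ (a = 0 ∧ b = 2) ∨ (a = 0 ∧ b = 1) ∨ (a = 1 ∧ b = 0) ∨
    (a = 3 ∧ b = 4) ∨ (a = 4 ∧ b = 3)
  bidir_symm := by decide
  acyclic := by
    intro v h
    have h2 : Relation.TransGen
        (fun a b : Fin 5 => (![1, 2, 0, 0, 2] : Fin 5 → ℕ) a < ![1, 2, 0, 0, 2] b) v v :=
      Relation.TransGen.mono (show ∀ a b : Fin 5, _ → _ from by decide) v v h
    have htr : Transitive
        (fun a b : Fin 5 => (![1, 2, 0, 0, 2] : Fin 5 → ℕ) a < ![1, 2, 0, 0, 2] b) :=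
      fun _ _ _ hab hbc => lt_trans hab hbc
    haveI : IsTrans (Fin 5)
        (fun a b : Fin 5 => (![1, 2, 0, 0, 2] : Fin 5 → ℕ) a < ![1, 2, 0, 0, 2] b) :=
      ⟨fun _ _ _ hab hbc => htr hab hbc⟩
    rw [Relation.transGen_eq_self] at h2
    exact lt_irrefl _ h2

noncomputable section AuxProof

open Finset

/-- Indicator with a fixed classical `Decidable` instance. -/
def cind (c : Prop) (r : ℝ) : ℝ := @ite ℝ c (Classical.propDecidable c) r 0

lemma ite0_eq {c : Prop} {i : Decidable c} (r : ℝ) : @ite ℝ c i r 0 = cind c r := by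
  have h := Subsingleton.elim i (Classical.propDecidable c)
  subst h
  rfl

lemma cind_congr {c d : Prop} (h : c ↔ d) (r : ℝ) : cind c r = cind d r := by
  unfold cind
  exact if_congr h rfl rfl

lemma cind_pos {c : Prop} (h : c) (r : ℝ) : cind c r = r := by
  unfold cind
  exact if_pos h

lemma cind_neg {c : Prop} (h : ¬ c) (r : ℝ) : cind c r = 0 := by
  unfold cind
  exact if_neg h

lemma cind_nonneg {c : Prop} {r : ℝ} (h : 0 ≤ r) : 0 ≤ cind c r := by
  unfold cind
  split_ifs
  · exact h
  · exact le_refl 0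

lemma cind_mono {c d : Prop} {r : ℝ} (h : c → d) (hr : 0 ≤ r) : cind c r ≤ cind d r := by
  unfold cind
  split_ifs with h1 h2
  · exact le_refl r
  · exact absurd (h h1) h2
  · exact hr
  · exact le_refl 0

lemma sum_cind_eq {α : Type} [Fintype α] (b : α) (f : α → ℝ) :
    ∑ a : α, cind (b = a) (f a) = f b := by
  rw [Finset.sum_eq_single b]
  · exact cind_pos rfl (f b)
  · intro c _ hc
    exact cind_neg (fun h => hc h.symm) (f c)
  · intro h
    exact absurd (Finset.mem_univ b) h

variable {V Val : Type} [Fintype V] [DecidableEq V] [Fintype Val] {G : ADMG V}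

lemma mu_nonneg (M : SCM V Val G) (ω : M.L → M.NVal) : 0 ≤ M.μ ω :=
  Finset.prod_nonneg fun l _ => M.ν_nonneg l (ω l)

lemma sum_mu (M : SCM V Val G) : ∑ ω : M.L → M.NVal, M.μ ω = 1 := by
  unfold SCM.μ
  rw [← Fintype.prod_sum (fun l x => M.ν l x)]
  simp [M.ν_sum]

lemma sum_ind_mono (M : SCM V Val G) (χ χ' : (M.L → M.NVal) → Prop)
    (h : ∀ ω, χ ω → χ' ω) :
    (∑ ω, cind (χ ω) (M.μ ω)) ≤ (∑ ω, cind (χ' ω) (M.μ ω)) :=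
  Finset.sum_le_sum fun ω _ => cind_mono (h ω) (mu_nonneg M ω)

lemma sum_ind_nonneg (M : SCM V Val G) (χ : (M.L → M.NVal) → Prop) :
    0 ≤ ∑ ω, cind (χ ω) (M.μ ω) :=
  Finset.sum_nonneg fun ω _ => cind_nonneg (mu_nonneg M ω)

/-- Independence splitting: if `χ1` only depends on latents satisfying `p`
and `χ2` only on latents not satisfying `p`, the joint indicator sum factors. -/
lemma indep_split (M : SCM V Val G) (p : M.L → Prop)
    (χ1 χ2 : (M.L → M.NVal) → Prop)
    (h1 : ∀ ω ω', (∀ l, p l → ω l = ω' l) → χ1 ω → χ1 ω')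
    (h2 : ∀ ω ω', (∀ l, ¬ p l → ω l = ω' l) → χ2 ω → χ2 ω') :
    (∑ ω, cind (χ1 ω ∧ χ2 ω) (M.μ ω)) =
      (∑ ω, cind (χ1 ω) (M.μ ω)) * (∑ ω, cind (χ2 ω) (M.μ ω)) := by
  let c : (M.L → M.NVal) → (M.L → M.NVal) → (M.L → M.NVal) :=
    fun ω ω' l => @ite _ (p l) (Classical.propDecidable (p l)) (ω l) (ω' l)
  have hag1 : ∀ ω ω' l, p l → c ω ω' l = ω l := fun ω ω' l hl => if_pos hl
  have hag2 : ∀ ω ω' l, ¬ p l → c ω ω' l = ω' l := fun ω ω' l hl => if_neg hl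
  have hcc : ∀ ω ω' : M.L → M.NVal, c (c ω ω') (c ω' ω) = ω := by
    intro ω ω'
    funext l
    by_cases hl : p l
    · rw [hag1 _ _ _ hl, hag1 _ _ _ hl]
    · rw [hag2 _ _ _ hl, hag2 _ _ _ hl]
  let E : ((M.L → M.NVal) × (M.L → M.NVal)) ≃ ((M.L → M.NVal) × (M.L → M.NVal)) :=
    { toFun := fun q => (c q.1 q.2, c q.2 q.1)
      invFun := fun q => (c q.1 q.2, c q.2 q.1)
      left_inv := fun q => Prod.ext (hcc q.1 q.2) (hcc q.2 q.1)
      right_inv := fun q => Prod.ext (hcc q.1 q.2) (hcc q.2 q.1) }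
  have key : ∀ ω ω' : M.L → M.NVal,
      cind (χ1 (c ω ω')) (M.μ (c ω ω')) * cind (χ2 (c ω' ω)) (M.μ (c ω' ω))
        = cind (χ1 ω ∧ χ2 ω) (M.μ ω) * M.μ ω' := by
    intro ω ω'
    have e1 : χ1 (c ω ω') ↔ χ1 ω :=
      ⟨h1 _ _ (fun l hl => hag1 ω ω' l hl), h1 _ _ (fun l hl => (hag1 ω ω' l hl).symm)⟩
    have e2 : χ2 (c ω' ω) ↔ χ2 ω :=
      ⟨h2 _ _ (fun l hl => hag2 ω' ω l hl), h2 _ _ (fun l hl => (hag2 ω' ω l hl).symm)⟩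
    have hm : M.μ (c ω ω') * M.μ (c ω' ω) = M.μ ω * M.μ ω' := by
      unfold SCM.μ
      rw [← Finset.prod_mul_distrib, ← Finset.prod_mul_distrib]
      refine Finset.prod_congr rfl fun l _ => ?_
      by_cases hl : p l
      · rw [hag1 _ _ _ hl, hag1 _ _ _ hl]
      · rw [hag2 _ _ _ hl, hag2 _ _ _ hl, mul_comm]
    rw [cind_congr e1, cind_congr e2]
    by_cases hA : χ1 ω <;> by_cases hB : χ2 ω
    · rw [cind_pos hA, cind_pos hB, cind_pos ⟨hA, hB⟩, hm]
    · rw [cind_neg hB, mul_zero,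
        cind_neg (show ¬(χ1 ω ∧ χ2 ω) from fun h => hB h.2), zero_mul]
    · rw [cind_neg hA, zero_mul,
        cind_neg (show ¬(χ1 ω ∧ χ2 ω) from fun h => hA h.1), zero_mul]
    · rw [cind_neg hA, zero_mul,
        cind_neg (show ¬(χ1 ω ∧ χ2 ω) from fun h => hA h.1), zero_mul]
  have prodsum : ∀ g h : (M.L → M.NVal) → ℝ,
      (∑ ω, g ω) * (∑ ω, h ω) =
        ∑ q : ((M.L → M.NVal) × (M.L → M.NVal)), g q.1 * h q.2 := by
    intro g h
    rw [Finset.sum_mul_sum, Fintype.sum_prod_type]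
  calc (∑ ω, cind (χ1 ω ∧ χ2 ω) (M.μ ω))
      = (∑ ω, cind (χ1 ω ∧ χ2 ω) (M.μ ω)) * ∑ ω', M.μ ω' := by
        rw [sum_mu, mul_one]
    _ = ∑ q : ((M.L → M.NVal) × (M.L → M.NVal)),
          cind (χ1 q.1 ∧ χ2 q.1) (M.μ q.1) * M.μ q.2 := prodsum _ _
    _ = ∑ q : ((M.L → M.NVal) × (M.L → M.NVal)),
          cind (χ1 (E q).1) (M.μ (E q).1) * cind (χ2 (E q).2) (M.μ (E q).2) := by
        refine Finset.sum_congr rfl fun q _ => ?_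
        exact (key q.1 q.2).symm
    _ = ∑ q : ((M.L → M.NVal) × (M.L → M.NVal)),
          cind (χ1 q.1) (M.μ q.1) * cind (χ2 q.2) (M.μ q.2) :=
        Equiv.sum_comp E fun q => cind (χ1 q.1) (M.μ q.1) * cind (χ2 q.2) (M.μ q.2)
    _ = (∑ ω, cind (χ1 ω) (M.μ ω)) * (∑ ω, cind (χ2 ω) (M.μ ω)) :=
        (prodsum (fun ω => cind (χ1 ω) (M.μ ω)) (fun ω => cind (χ2 ω) (M.μ ω))).symm

lemma P_eq (M : SCM V Val G) (I : Finset V) (x y : V → Val) :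
    M.P I x y = ∑ ω, cind (M.solve I x ω = y) (M.μ ω) := by
  unfold SCM.P
  exact Finset.sum_congr rfl fun ω _ => ite0_eq (M.μ ω)

/-- `Pm` as a single latent-space sum. -/
lemma Pm_eq (M : SCM V Val G) (I : Finset V) (S : Finset V) (x y : V → Val) :
    M.Pm I x S y = ∑ ω, cind (∀ v ∈ S, M.solve I x ω v = y v) (M.μ ω) := by
  unfold SCM.Pm
  have step : ∀ z : V → Val,
      (if (∀ v ∈ S, z v = y v) then M.P I x z else 0)
        = ∑ ω, cind ((∀ v ∈ S, z v = y v) ∧ M.solve I x ω = z) (M.μ ω) := by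
    intro z
    rw [ite0_eq (M.P I x z)]
    by_cases h : (∀ v ∈ S, z v = y v)
    · rw [cind_pos h, P_eq]
      exact Finset.sum_congr rfl fun ω _ =>
        cind_congr ⟨fun hh => ⟨h, hh⟩, fun hh => hh.2⟩ _
    · rw [cind_neg h]
      symm
      exact Finset.sum_eq_zero fun ω _ => cind_neg (fun hh => h hh.1) _
  rw [Finset.sum_congr rfl fun z _ => step z, Finset.sum_comm]
  refine Finset.sum_congr rfl fun ω _ => ?_
  have step2 : ∀ z : V → Val,
      cind ((∀ v ∈ S, z v = y v) ∧ M.solve I x ω = z) (M.μ ω)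
        = cind (M.solve I x ω = z) (cind (∀ v ∈ S, z v = y v) (M.μ ω)) := by
    intro z
    by_cases h1 : M.solve I x ω = z
    · rw [cind_pos h1]
      exact cind_congr (by simp [h1]) _
    · rw [cind_neg h1, cind_neg (fun h => h1 h.2)]
  rw [Finset.sum_congr rfl fun z _ => step2 z, sum_cind_eq (M.solve I x ω)]

end AuxProof

noncomputable section G5Aux

variable {Val : Type} [Fintype Val]

lemma G5_dir2 : ∀ p : Fin 5, ¬ G5.dir p 2 := by
  rintro p (⟨-, h⟩ | ⟨-, h⟩ | ⟨-, h⟩ | ⟨-, h⟩) <;> exact absurd h (by decide)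

lemma G5_dir3 : ∀ p : Fin 5, ¬ G5.dir p 3 := by
  rintro p (⟨-, h⟩ | ⟨-, h⟩ | ⟨-, h⟩ | ⟨-, h⟩) <;> exact absurd h (by decide)

lemma G5_dir0 : ∀ p : Fin 5, G5.dir p 0 → p = 2 ∨ p = 3 := by
  rintro p (⟨rfl, -⟩ | ⟨rfl, h⟩ | ⟨rfl, -⟩ | ⟨rfl, h⟩)
  · exact Or.inl rfl
  · exact absurd h (by decide)
  · exact Or.inr rfl
  · exact absurd h (by decide)

lemma G5_dir1 : ∀ p : Fin 5, G5.dir p 1 → p = 0 := by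
  rintro p (⟨rfl, h⟩ | ⟨rfl, -⟩ | ⟨rfl, h⟩ | ⟨rfl, h⟩)
  · exact absurd h (by decide)
  · rfl
  · exact absurd h (by decide)
  · exact absurd h (by decide)

lemma G5_dir4 : ∀ p : Fin 5, G5.dir p 4 → p = 0 := by
  rintro p (⟨rfl, h⟩ | ⟨rfl, h⟩ | ⟨rfl, h⟩ | ⟨rfl, -⟩)
  · exact absurd h (by decide)
  · exact absurd h (by decide)
  · exact absurd h (by decide)
  · rfl

lemma G5_bidir34 : ∀ v w : Fin 5, (v = 3 ∨ v = 4) → (w = 0 ∨ w = 1 ∨ w = 2) →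
    ¬ G5.bidir v w := by
  rintro v w hv hw (⟨rfl, rfl⟩ | ⟨rfl, rfl⟩ | ⟨rfl, rfl⟩ | ⟨rfl, rfl⟩ | ⟨rfl, rfl⟩ | ⟨rfl, rfl⟩) <;>
    first
      | (rcases hv with h | h <;> exact absurd h (by decide))
      | (rcases hw with h | h | h <;> exact absurd h (by decide))

namespace SCM

variable (M : SCM (Fin 5) Val G5) (y : Fin 5 → Val)

/-- c-factor of the c-component `{Z₁,Z₂,Z₃}`. -/
def qA : ℝ :=
  ∑ ω : M.L → M.NVal, cind (M.f 0 y ω = y 0 ∧ M.f 1 y ω = y 1 ∧ M.f 2 y ω = y 2) (M.μ ω)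

/-- c-factor of the c-component `{X₁,X₂}`. -/
def qB : ℝ :=
  ∑ ω : M.L → M.NVal, cind (M.f 3 y ω = y 3 ∧ M.f 4 y ω = y 4) (M.μ ω)

/-- marginal of the `{X₁,X₂}` factor over `X₂`. -/
def qbeta : ℝ :=
  ∑ ω : M.L → M.NVal, cind (M.f 3 y ω = y 3) (M.μ ω)

/-- marginal of the `{Z₁,Z₂,Z₃}` factor over `Z₂`. -/
def qAA : ℝ :=
  ∑ ω : M.L → M.NVal, cind (M.f 0 y ω = y 0 ∧ M.f 2 y ω = y 2) (M.μ ω)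

/-- which latents belong to the c-component `{Z₁,Z₂,Z₃}`. -/
def pA (l : M.L) : Prop := M.reads 0 l ∨ M.reads 1 l ∨ M.reads 2 l

lemma readsB_not_pA (v : Fin 5) (hv : v = 3 ∨ v = 4) (l : M.L) (h : M.reads v l) :
    ¬ M.pA l := by
  rintro (h0 | h0 | h0)
  · exact G5_bidir34 v 0 hv (Or.inl rfl)
      (M.semiMarkov v 0 l (by rcases hv with rfl | rfl <;> decide) h h0)
  · exact G5_bidir34 v 1 hv (Or.inr (Or.inl rfl))
      (M.semiMarkov v 1 l (by rcases hv with rfl | rfl <;> decide) h h0)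
  · exact G5_bidir34 v 2 hv (Or.inr (Or.inr rfl))
      (M.semiMarkov v 2 l (by rcases hv with rfl | rfl <;> decide) h h0)

lemma depA (v : Fin 5) (hv : v = 0 ∨ v = 1 ∨ v = 2) (x : Fin 5 → Val)
    (ω ω' : M.L → M.NVal) (h : ∀ l, M.pA l → ω l = ω' l) :
    M.f v x ω = M.f v x ω' := by
  refine M.f_latents v x ω ω' fun l hl => h l ?_
  rcases hv with rfl | rfl | rfl
  · exact Or.inl hl
  · exact Or.inr (Or.inl hl)
  · exact Or.inr (Or.inr hl)

lemma depB (v : Fin 5) (hv : v = 3 ∨ v = 4) (x : Fin 5 → Val)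
    (ω ω' : M.L → M.NVal) (h : ∀ l, ¬ M.pA l → ω l = ω' l) :
    M.f v x ω = M.f v x ω' :=
  M.f_latents v x ω ω' fun l hl => h l (M.readsB_not_pA v hv l hl)

variable {I : Finset (Fin 5)} {ω : M.L → M.NVal}

lemma sol2 (h : (2 : Fin 5) ∉ I) : M.solve I y ω 2 = M.f 2 y ω := by
  rw [M.solve_spec, if_neg h]
  exact M.f_parents 2 _ y ω fun p hp => absurd hp (G5_dir2 p)

lemma sol3 (h : (3 : Fin 5) ∉ I) : M.solve I y ω 3 = M.f 3 y ω := by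
  rw [M.solve_spec, if_neg h]
  exact M.f_parents 3 _ y ω fun p hp => absurd hp (G5_dir3 p)

lemma sol0 (h : (0 : Fin 5) ∉ I) (e2 : M.solve I y ω 2 = y 2)
    (e3 : M.solve I y ω 3 = y 3) : M.solve I y ω 0 = M.f 0 y ω := by
  rw [M.solve_spec, if_neg h]
  refine M.f_parents 0 _ y ω fun p hp => ?_
  rcases G5_dir0 p hp with rfl | rfl
  · exact e2
  · exact e3

lemma sol1 (h : (1 : Fin 5) ∉ I) (e0 : M.solve I y ω 0 = y 0) :
    M.solve I y ω 1 = M.f 1 y ω := by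
  rw [M.solve_spec, if_neg h]
  refine M.f_parents 1 _ y ω fun p hp => ?_
  rcases G5_dir1 p hp with rfl
  exact e0

lemma sol4 (h : (4 : Fin 5) ∉ I) (e0 : M.solve I y ω 0 = y 0) :
    M.solve I y ω 4 = M.f 4 y ω := by
  rw [M.solve_spec, if_neg h]
  refine M.f_parents 4 _ y ω fun p hp => ?_
  rcases G5_dir4 p hp with rfl
  exact e0

lemma ev_full (ω : M.L → M.NVal) :
    M.solve ∅ y ω = y ↔
      ((M.f 0 y ω = y 0 ∧ M.f 1 y ω = y 1 ∧ M.f 2 y ω = y 2) ∧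
        (M.f 3 y ω = y 3 ∧ M.f 4 y ω = y 4)) := by
  constructor
  · intro h
    have hv : ∀ v, M.f v y ω = y v := by
      intro v
      have h1 : M.f v (M.solve ∅ y ω) ω = M.f v y ω :=
        M.f_parents v _ y ω fun p _ => congrFun h p
      have h2 : M.solve ∅ y ω v = M.f v (M.solve ∅ y ω) ω := by
        rw [M.solve_spec, if_neg (Finset.notMem_empty v)]
      rw [← h1, ← h2, h]
    exact ⟨⟨hv 0, hv 1, hv 2⟩, hv 3, hv 4⟩
  · rintro ⟨⟨h0, h1, h2⟩, h3, h4⟩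
    have e2 : M.solve ∅ y ω 2 = y 2 := (M.sol2 y (Finset.notMem_empty _)).trans h2
    have e3 : M.solve ∅ y ω 3 = y 3 := (M.sol3 y (Finset.notMem_empty _)).trans h3
    have e0 : M.solve ∅ y ω 0 = y 0 :=
      (M.sol0 y (Finset.notMem_empty _) e2 e3).trans h0
    have e1 : M.solve ∅ y ω 1 = y 1 := (M.sol1 y (Finset.notMem_empty _) e0).trans h1
    have e4 : M.solve ∅ y ω 4 = y 4 := (M.sol4 y (Finset.notMem_empty _) e0).trans h4
    funext v
    fin_cases v <;> assumption

lemma ev_0123 (ω : M.L → M.NVal) :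
    (∀ v ∈ ({0, 1, 2, 3} : Finset (Fin 5)), M.solve ∅ y ω v = y v) ↔
      ((M.f 0 y ω = y 0 ∧ M.f 1 y ω = y 1 ∧ M.f 2 y ω = y 2) ∧ M.f 3 y ω = y 3) := by
  constructor
  · intro h
    have e2 := h 2 (by decide)
    have e3 := h 3 (by decide)
    have e0 := h 0 (by decide)
    have e1 := h 1 (by decide)
    exact ⟨⟨(M.sol0 y (Finset.notMem_empty _) e2 e3).symm.trans e0,
      (M.sol1 y (Finset.notMem_empty _) e0).symm.trans e1,
      (M.sol2 y (Finset.notMem_empty _)).symm.trans e2⟩,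
      (M.sol3 y (Finset.notMem_empty _)).symm.trans e3⟩
  · rintro ⟨⟨h0, h1, h2⟩, h3⟩
    have e2 : M.solve ∅ y ω 2 = y 2 := (M.sol2 y (Finset.notMem_empty _)).trans h2
    have e3 : M.solve ∅ y ω 3 = y 3 := (M.sol3 y (Finset.notMem_empty _)).trans h3
    have e0 : M.solve ∅ y ω 0 = y 0 :=
      (M.sol0 y (Finset.notMem_empty _) e2 e3).trans h0
    have e1 : M.solve ∅ y ω 1 = y 1 := (M.sol1 y (Finset.notMem_empty _) e0).trans h1
    intro v hv
    fin_cases hv <;> assumption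

lemma ev_3 (ω : M.L → M.NVal) :
    (∀ v ∈ ({3} : Finset (Fin 5)), M.solve ∅ y ω v = y v) ↔ M.f 3 y ω = y 3 := by
  constructor
  · intro h
    exact (M.sol3 y (Finset.notMem_empty _)).symm.trans (h 3 (by decide))
  · intro h3 v hv
    fin_cases hv
    exact (M.sol3 y (Finset.notMem_empty _)).trans h3

lemma ev_3402 (ω : M.L → M.NVal) :
    (∀ v ∈ ({3, 4, 0, 2} : Finset (Fin 5)), M.solve ∅ y ω v = y v) ↔
      ((M.f 0 y ω = y 0 ∧ M.f 2 y ω = y 2) ∧ (M.f 3 y ω = y 3 ∧ M.f 4 y ω = y 4)) := by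
  constructor
  · intro h
    have e2 := h 2 (by decide)
    have e3 := h 3 (by decide)
    have e0 := h 0 (by decide)
    have e4 := h 4 (by decide)
    exact ⟨⟨(M.sol0 y (Finset.notMem_empty _) e2 e3).symm.trans e0,
      (M.sol2 y (Finset.notMem_empty _)).symm.trans e2⟩,
      (M.sol3 y (Finset.notMem_empty _)).symm.trans e3,
      (M.sol4 y (Finset.notMem_empty _) e0).symm.trans e4⟩
  · rintro ⟨⟨h0, h2⟩, h3, h4⟩
    have e2 : M.solve ∅ y ω 2 = y 2 := (M.sol2 y (Finset.notMem_empty _)).trans h2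
    have e3 : M.solve ∅ y ω 3 = y 3 := (M.sol3 y (Finset.notMem_empty _)).trans h3
    have e0 : M.solve ∅ y ω 0 = y 0 :=
      (M.sol0 y (Finset.notMem_empty _) e2 e3).trans h0
    have e4 : M.solve ∅ y ω 4 = y 4 := (M.sol4 y (Finset.notMem_empty _) e0).trans h4
    intro v hv
    fin_cases hv <;> assumption

lemma ev_do012 (ω : M.L → M.NVal) :
    (∀ v ∈ ({0, 1, 2} : Finset (Fin 5)), M.solve ({3} : Finset (Fin 5)) y ω v = y v) ↔
      (M.f 0 y ω = y 0 ∧ M.f 1 y ω = y 1 ∧ M.f 2 y ω = y 2) := by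
  have e3 : M.solve ({3} : Finset (Fin 5)) y ω 3 = y 3 := by
    rw [M.solve_spec, if_pos (by decide)]
  constructor
  · intro h
    have e2 := h 2 (by decide)
    have e0 := h 0 (by decide)
    have e1 := h 1 (by decide)
    exact ⟨(M.sol0 y (by decide) e2 e3).symm.trans e0,
      (M.sol1 y (by decide) e0).symm.trans e1,
      (M.sol2 y (by decide)).symm.trans e2⟩
  · rintro ⟨h0, h1, h2⟩
    have e2 : M.solve ({3} : Finset (Fin 5)) y ω 2 = y 2 :=
      (M.sol2 y (by decide)).trans h2
    have e0 : M.solve ({3} : Finset (Fin 5)) y ω 0 = y 0 :=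
      (M.sol0 y (by decide) e2 e3).trans h0
    have e1 : M.solve ({3} : Finset (Fin 5)) y ω 1 = y 1 :=
      (M.sol1 y (by decide) e0).trans h1
    intro v hv
    fin_cases hv <;> assumption

lemma depA_event (ω ω' : M.L → M.NVal) (h : ∀ l, M.pA l → ω l = ω' l) :
    (M.f 0 y ω = y 0 ∧ M.f 1 y ω = y 1 ∧ M.f 2 y ω = y 2) →
      (M.f 0 y ω' = y 0 ∧ M.f 1 y ω' = y 1 ∧ M.f 2 y ω' = y 2) := by
  rintro ⟨h0, h1, h2⟩
  exact ⟨(M.depA 0 (by decide) y ω ω' h).symm.trans h0,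
    (M.depA 1 (by decide) y ω ω' h).symm.trans h1,
    (M.depA 2 (by decide) y ω ω' h).symm.trans h2⟩

lemma depA_event' (ω ω' : M.L → M.NVal) (h : ∀ l, M.pA l → ω l = ω' l) :
    (M.f 0 y ω = y 0 ∧ M.f 2 y ω = y 2) →
      (M.f 0 y ω' = y 0 ∧ M.f 2 y ω' = y 2) := by
  rintro ⟨h0, h2⟩
  exact ⟨(M.depA 0 (by decide) y ω ω' h).symm.trans h0,
    (M.depA 2 (by decide) y ω ω' h).symm.trans h2⟩

lemma depB_event (ω ω' : M.L → M.NVal) (h : ∀ l, ¬ M.pA l → ω l = ω' l) :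
    (M.f 3 y ω = y 3 ∧ M.f 4 y ω = y 4) →
      (M.f 3 y ω' = y 3 ∧ M.f 4 y ω' = y 4) := by
  rintro ⟨h3, h4⟩
  exact ⟨(M.depB 3 (by decide) y ω ω' h).symm.trans h3,
    (M.depB 4 (by decide) y ω ω' h).symm.trans h4⟩

lemma depB_event3 (ω ω' : M.L → M.NVal) (h : ∀ l, ¬ M.pA l → ω l = ω' l) :
    M.f 3 y ω = y 3 → M.f 3 y ω' = y 3 := fun h3 =>
  (M.depB 3 (by decide) y ω ω' h).symm.trans h3

lemma L1 : M.P ∅ y y = M.qA y * M.qB y := by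
  rw [P_eq]
  unfold SCM.qA SCM.qB
  rw [Finset.sum_congr rfl fun ω _ => cind_congr (M.ev_full y ω) (M.μ ω)]
  exact indep_split M M.pA _ _ (M.depA_event y) (M.depB_event y)

lemma L2 : M.Pm ∅ y ({0, 1, 2, 3} : Finset (Fin 5)) y = M.qA y * M.qbeta y := by
  rw [Pm_eq]
  unfold SCM.qA SCM.qbeta
  rw [Finset.sum_congr rfl fun ω _ => cind_congr (M.ev_0123 y ω) (M.μ ω)]
  exact indep_split M M.pA _ _ (M.depA_event y) (M.depB_event3 y)

lemma L3 : M.Pm ∅ y ({3} : Finset (Fin 5)) y = M.qbeta y := by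
  rw [Pm_eq]
  unfold SCM.qbeta
  exact Finset.sum_congr rfl fun ω _ => cind_congr (M.ev_3 y ω) (M.μ ω)

lemma L4 : M.Pm ∅ y ({3, 4, 0, 2} : Finset (Fin 5)) y = M.qAA y * M.qB y := by
  rw [Pm_eq]
  unfold SCM.qAA SCM.qB
  rw [Finset.sum_congr rfl fun ω _ => cind_congr (M.ev_3402 y ω) (M.μ ω)]
  exact indep_split M M.pA _ _ (M.depA_event' y) (M.depB_event y)

lemma L5 : M.Pm ({3} : Finset (Fin 5)) y ({0, 1, 2} : Finset (Fin 5)) y = M.qA y := by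
  rw [Pm_eq]
  unfold SCM.qA
  exact Finset.sum_congr rfl fun ω _ => cind_congr (M.ev_do012 y ω) (M.μ ω)

lemma L6 : M.qAA y = ∑ c : Val, M.qA (Function.update y 1 c) := by
  have key : ∀ c : Val, M.qA (Function.update y 1 c) =
      ∑ ω : M.L → M.NVal,
        cind (M.f 0 y ω = y 0 ∧ M.f 1 y ω = c ∧ M.f 2 y ω = y 2) (M.μ ω) := by
    intro c
    unfold SCM.qA
    refine Finset.sum_congr rfl fun ω _ => cind_congr ?_ (M.μ ω)
    have r0 : M.f 0 (Function.update y 1 c) ω = M.f 0 y ω := by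
      refine M.f_parents 0 _ y ω fun p hp => ?_
      rcases G5_dir0 p hp with rfl | rfl
      · exact Function.update_of_ne (show (2 : Fin 5) ≠ 1 by decide) c y
      · exact Function.update_of_ne (show (3 : Fin 5) ≠ 1 by decide) c y
    have r1 : M.f 1 (Function.update y 1 c) ω = M.f 1 y ω := by
      refine M.f_parents 1 _ y ω fun p hp => ?_
      rcases G5_dir1 p hp with rfl
      exact Function.update_of_ne (show (0 : Fin 5) ≠ 1 by decide) c y
    have r2 : M.f 2 (Function.update y 1 c) ω = M.f 2 y ω :=
      M.f_parents 2 _ y ω fun p hp => absurd hp (G5_dir2 p)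
    rw [r0, r1, r2, Function.update_self,
      Function.update_of_ne (show (0 : Fin 5) ≠ 1 by decide),
      Function.update_of_ne (show (2 : Fin 5) ≠ 1 by decide)]
  rw [Finset.sum_congr rfl fun c _ => key c, Finset.sum_comm]
  unfold SCM.qAA
  refine Finset.sum_congr rfl fun ω _ => ?_
  symm
  by_cases hPQ : M.f 0 y ω = y 0 ∧ M.f 2 y ω = y 2
  · calc (∑ c : Val, cind (M.f 0 y ω = y 0 ∧ M.f 1 y ω = c ∧ M.f 2 y ω = y 2) (M.μ ω))
        = ∑ c : Val, cind (M.f 1 y ω = c) (M.μ ω) := by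
          refine Finset.sum_congr rfl fun c _ => cind_congr ?_ (M.μ ω)
          constructor
          · exact fun h => h.2.1
          · exact fun h => ⟨hPQ.1, h, hPQ.2⟩
      _ = cind (M.f 0 y ω = y 0 ∧ M.f 2 y ω = y 2) (M.μ ω) := by
          rw [sum_cind_eq (M.f 1 y ω) (fun _ => M.μ ω), cind_pos hPQ]
  · rw [cind_neg hPQ]
    refine Finset.sum_eq_zero fun c _ => ?_
    exact cind_neg (fun h => hPQ ⟨h.1, h.2.2⟩) (M.μ ω)

lemma qA_nonneg : 0 ≤ M.qA y := by
  unfold SCM.qA; exact sum_ind_nonneg M _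

lemma qB_nonneg : 0 ≤ M.qB y := by
  unfold SCM.qB; exact sum_ind_nonneg M _

lemma qAA_ge_qA : M.qA y ≤ M.qAA y := by
  unfold SCM.qA SCM.qAA
  exact sum_ind_mono M _ _ fun ω h => ⟨h.1, h.2.2⟩

lemma P_le_qbeta : M.P ∅ y y ≤ M.qbeta y := by
  rw [P_eq]
  unfold SCM.qbeta
  exact sum_ind_mono M _ _ fun ω h => ((M.ev_full y ω).1 h).2.1

end SCM

end G5Aux

/-- in the graph `G5`, any two strictly positive SCMs `P` (= `M1`)
and `Q` (= `M2`) with `P(z₁,z₂,z₃ | x₁) = Q(z₁,z₂,z₃ | do(x₁))` and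
`P(x₁,x₂,z₁,z₃) = Q(x₁,x₂,z₁,z₃)` have the same full joint distribution. -/
theorem modular_matching_implies_joint_matching
    {Val : Type} [Fintype Val]
    (M1 M2 : SCM (Fin 5) Val G5) (h1 : M1.positive) (h2 : M2.positive)
    (hz : ∀ y : Fin 5 → Val,
      M1.cond ∅ y ({0, 1, 2} : Finset (Fin 5)) ({3} : Finset (Fin 5)) y =
        M2.Pm ({3} : Finset (Fin 5)) y ({0, 1, 2} : Finset (Fin 5)) y)
    (hx : ∀ y : Fin 5 → Val,
      M1.Pm ∅ y ({3, 4, 0, 2} : Finset (Fin 5)) y =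
        M2.Pm ∅ y ({3, 4, 0, 2} : Finset (Fin 5)) y) :
    ∀ y : Fin 5 → Val, M1.P ∅ y y = M2.P ∅ y y := by
  have key : ∀ y : Fin 5 → Val, M1.qA y = M2.qA y := by
    intro y
    have hbeta : M1.qbeta y ≠ 0 :=
      ne_of_gt (lt_of_lt_of_le (h1 y y) (M1.P_le_qbeta y))
    have e1 : M1.cond ∅ y ({0, 1, 2} : Finset (Fin 5)) ({3} : Finset (Fin 5)) y
        = M1.qA y := by
      unfold SCM.cond
      have hU : (({0, 1, 2} : Finset (Fin 5)) ∪ ({3} : Finset (Fin 5)))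
          = ({0, 1, 2, 3} : Finset (Fin 5)) := by decide
      rw [hU, M1.L2 y, M1.L3 y, mul_div_assoc, div_self hbeta, mul_one]
    rw [← e1, hz y, M2.L5 y]
  have hAA : ∀ y : Fin 5 → Val, M1.qAA y = M2.qAA y := by
    intro y
    rw [M1.L6 y, M2.L6 y]
    exact Finset.sum_congr rfl fun c _ => key _
  have hprod : ∀ y : Fin 5 → Val, M1.qAA y * M1.qB y = M2.qAA y * M2.qB y := by
    intro y
    rw [← M1.L4 y, ← M2.L4 y]
    exact hx y
  intro y
  have hA2pos : 0 < M2.qA y := by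
    have hp := h2 y y
    rw [M2.L1 y] at hp
    rcases lt_or_eq_of_le (M2.qA_nonneg y) with h | h
    · exact h
    · rw [← h, zero_mul] at hp
      exact absurd hp (lt_irrefl 0)
  have hAA2pos : 0 < M2.qAA y := lt_of_lt_of_le hA2pos (M2.qAA_ge_qA y)
  have hB : M1.qB y = M2.qB y := by
    have h12 := hprod y
    rw [hAA y] at h12
    exact mul_left_cancel₀ (ne_of_gt hAA2pos) h12
  rw [M1.L1 y, M2.L1 y, key y, hB]
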